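/- Let W_a and W_b be cyclic walks over the n targets (possibly with depot), each with at most 2n−1 visits and each containing some common target t exactly once, and let W_s be a common shortcut walk of both, also containing t exactly once. Then any cyclic concatenation of copies of W_a, W_b, and W_s (all rotated to start at t) in which no copy of W_a is adjacent to a copy of W_b has revisit time equal to max(R(W_a), R(W_b)). -/

import Mathlib

/-- Total cost of consecutive steps of a finite sequence of vertices. -/
def chainCost {V : Type*} (c : V → V → ℝ) : List V → ℝ
  | [] => 0
  | [_] => 0
  | x :: y :: t => c x y + chainCost c (y :: t)

/-- A depot-free spanning revisit sequence with `v` visits, written as a list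
`(u_0, ..., u_{v-1}, u_0)`: length `v+1`, cyclically closed, consecutive elements
distinct, all elements targets, covering all targets. -/
def IsRevSeqND {V : Type*} (N : Finset V) (v : ℕ) (l : List V) : Prop :=
  l.length = v + 1 ∧ l.head? = l.getLast? ∧ l.Chain' (· ≠ ·) ∧
    (∀ x ∈ l, x ∈ N) ∧ (∀ t ∈ N, t ∈ l)

/-- A depot-containing spanning revisit sequence with `v` visits, written as a list
`(u_0, ..., u_{v-1}, u_0)`: starts and ends at the same target, consecutive elements
distinct, elements in `N ∪ {d}`, covering all targets, depot appearing exactly once. -/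
def IsRevSeqD {V : Type*} [DecidableEq V] (N : Finset V) (d : V) (v : ℕ) (l : List V) : Prop :=
  l.length = v + 1 ∧ l.head? = l.getLast? ∧ l.Chain' (· ≠ ·) ∧
    (∀ x ∈ l, x ∈ N ∨ x = d) ∧ (∀ t ∈ N, t ∈ l) ∧ l.count d = 1 ∧
    (∃ u ∈ N, l.head? = some u)
/-- Cost of the stretch of the (periodically extended) walk `f` from index `i` to `j`. -/
noncomputable def segCost {V : Type*} (c : V → V → ℝ) (f : ℕ → V) (i j : ℕ) : ℝ :=
  ∑ m ∈ Finset.range (j - i), c (f (i + m)) (f (i + m + 1))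

/-- Indices `i < j` are consecutive occurrences of the terminus `f i` in the walk `f`. -/
def IsRevisit {V : Type*} (f : ℕ → V) (i j : ℕ) : Prop :=
  i < j ∧ f j = f i ∧ ∀ m, i < m → m < j → f m ≠ f i

/-- The stretch of `f` from `i` to `j` visits every target in `N`. -/
def Spans {V : Type*} (N : Finset V) (f : ℕ → V) (i j : ℕ) : Prop :=
  ∀ t ∈ N, ∃ m, i ≤ m ∧ m ≤ j ∧ f m = t

/-- The stretch of `f` from `i` to `j` visits the depot. -/
def HasDepot {V : Type*} (dV : V) (f : ℕ → V) (i j : ℕ) : Prop :=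
  ∃ m, i ≤ m ∧ m ≤ j ∧ f m = dV

/-- The set of travel times of all spanning revisit sequences (with a target terminus,
starting within one period `p`) of the periodic walk `f`. The revisit time of the walk
is the greatest element of this set. -/
def revCosts {V : Type*} (c : V → V → ℝ) (N : Finset V) (p : ℕ) (f : ℕ → V) : Set ℝ :=
  {x | ∃ i j, i < p ∧ f i ∈ N ∧ IsRevisit f i j ∧ Spans N f i j ∧ x = segCost c f i j}

/-- A PMP walk with `v` visits, modelled as its periodic extension: period `v`,
consecutive visits distinct, all visits are targets, every target visited in a period. -/
def IsPMPWalkFun {V : Type*} (N : Finset V) (v : ℕ) (f : ℕ → V) : Prop :=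
  (∀ i, f (i + v) = f i) ∧ (∀ i, f i ≠ f (i + 1)) ∧
    (∀ i, f i ∈ N) ∧ (∀ t ∈ N, ∃ i, i < v ∧ f i = t)

/-- A PMP-D walk with `k` visits, modelled as its periodic extension: period `k`,
starts at the depot, the depot is visited exactly once per period, consecutive visits
distinct, visits in `N ∪ {d}`, every target visited in a period. -/
def IsPMPDWalkFun {V : Type*} (N : Finset V) (dV : V) (k : ℕ) (f : ℕ → V) : Prop :=
  (∀ i, f (i + k) = f i) ∧ (∀ i, f i ≠ f (i + 1)) ∧
    (∀ i, f i = dV ↔ k ∣ i) ∧ (∀ i, f i ∈ N ∨ f i = dV) ∧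
    (∀ t ∈ N, ∃ i, i < k ∧ f i = t)

/-- The set of revisit times of PMP-D walks with `m` visits; `RD*(m)` is its least element. -/
def pmpdRevTimes {V : Type*} (c : V → V → ℝ) (N : Finset V) (dV : V) (m : ℕ) : Set ℝ :=
  {r | ∃ f : ℕ → V, IsPMPDWalkFun N dV m f ∧ IsGreatest (revCosts c N m f) r}

/-- The set of revisit times of PMP walks with `m` visits; `R*(m)` is its least element. -/
def pmpRevTimes {V : Type*} (c : V → V → ℝ) (N : Finset V) (m : ℕ) : Set ℝ :=
  {r | ∃ f : ℕ → V, IsPMPWalkFun N m f ∧ IsGreatest (revCosts c N m f) r}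


section PMPAuxSection
set_option linter.unusedSectionVars false

namespace PMPAux

section
variable {V : Type*}

/-- cost of path x → l → y -/
def pcost (c : V → V → ℝ) (x : V) : List V → V → ℝ
  | [], y => c x y
  | a :: l, y => c x a + pcost c a l y

lemma pcost_append (c : V → V → ℝ) (l₁ : List V) (x a : V) (l₂ : List V) (y : V) :
    pcost c x (l₁ ++ a :: l₂) y = pcost c x l₁ a + pcost c a l₂ y := by
  induction l₁ generalizing x with
  | nil => simp [pcost]
  | cons b l ih => simp [pcost, ih, add_assoc]

lemma pcost_cons_le (c : V → V → ℝ) (htri : ∀ x y z, c x z ≤ c x y + c y z)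
    (l : List V) (x a y : V) : pcost c x l y ≤ c x a + pcost c a l y := by
  cases l with
  | nil => exact htri x a y
  | cons b l =>
    simp only [pcost, ← add_assoc]
    exact add_le_add_left (htri x a b) _

lemma pcost_sublist (c : V → V → ℝ) (htri : ∀ x y z, c x z ≤ c x y + c y z)
    {l₁ l₂ : List V} (h : l₁.Sublist l₂) (x y : V) :
    pcost c x l₁ y ≤ pcost c x l₂ y := by
  induction h generalizing x with
  | slnil => exact le_refl _
  | cons a h ih => exact (ih x).trans (pcost_cons_le c htri _ x a y)
  | cons_cons a h ih => exact add_le_add_right (ih a) _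

lemma segCost_Ico (c : V → V → ℝ) (f : ℕ → V) (i j : ℕ) :
    segCost c f i j = ∑ m ∈ Finset.Ico i j, c (f m) (f (m + 1)) := by
  rw [segCost, Finset.sum_Ico_eq_sum_range]

lemma segCost_mono (c : V → V → ℝ) (hnn : ∀ x y, 0 ≤ c x y) (f : ℕ → V) {i j j' : ℕ}
    (h : j ≤ j') : segCost c f i j ≤ segCost c f i j' := by
  rw [segCost_Ico, segCost_Ico]
  exact Finset.sum_le_sum_of_subset_of_nonneg
    (Finset.Ico_subset_Ico le_rfl h) (fun _ _ _ => hnn _ _)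

lemma segCost_add (c : V → V → ℝ) (f : ℕ → V) {i j l : ℕ} (hij : i ≤ j) (hjl : j ≤ l) :
    segCost c f i l = segCost c f i j + segCost c f j l := by
  rw [segCost_Ico, segCost_Ico, segCost_Ico, Finset.sum_Ico_consecutive _ hij hjl]

lemma segCost_single (c : V → V → ℝ) (f : ℕ → V) (i : ℕ) :
    segCost c f i (i + 1) = c (f i) (f (i + 1)) := by
  simp [segCost]

lemma segCost_period (c : V → V → ℝ) (f : ℕ → V) {p : ℕ}
    (hp : ∀ x, f (x + p) = f x) (i : ℕ) :
    segCost c f i (i + p) = segCost c f 0 p := by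
  induction i with
  | zero => simp
  | succ i ih =>
    rcases Nat.eq_zero_or_pos p with rfl | hppos
    · simp [segCost]
    · rw [← ih]
      have h1 : segCost c f i (i + p) = c (f i) (f (i + 1)) + segCost c f (i + 1) (i + p) := by
        rw [segCost_add c f (Nat.le_succ i) (by omega), segCost_single]
      have h2 : segCost c f (i + 1) (i + 1 + p)
          = segCost c f (i + 1) (i + p) + c (f (i + p)) (f (i + p + 1)) := by
        rw [segCost_add c f (by omega) (by omega : i + p ≤ i + 1 + p)]
        congr 1
        have : i + 1 + p = (i + p) + 1 := by omega
        rw [this, segCost_single]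
      rw [h2, h1, hp i]
      have : i + p + 1 = (i + 1) + p := by omega
      rw [this, hp (i + 1)]
      ring

lemma segCost_pcost (c : V → V → ℝ) (f : ℕ → V) (d : V) :
    ∀ (l : List V) (i : ℕ) (x y : V), f i = x →
    (∀ r, r < l.length → f (i + 1 + r) = l.getD r d) →
    f (i + 1 + l.length) = y →
    segCost c f i (i + 1 + l.length) = pcost c x l y := by
  intro l
  induction l with
  | nil =>
    intro i x y hx hv hy
    simp only [List.length_nil, Nat.add_zero] at hy ⊢
    rw [segCost_single, hx, hy]; rfl
  | cons a l ih =>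
    intro i x y hx hv hy
    have ha : f (i + 1) = a := by
      have := hv 0 (by simp)
      simpa using this
    have hsplit : segCost c f i (i + 1 + (a :: l).length)
        = c (f i) (f (i + 1)) + segCost c f (i + 1) (i + 1 + (a :: l).length) := by
      rw [segCost_add c f (Nat.le_succ i) (by simp), segCost_single]
    have hlen : i + 1 + (a :: l).length = (i + 1) + 1 + l.length := by
      simp; omega
    have hrec : segCost c f (i + 1) ((i + 1) + 1 + l.length) = pcost c a l y := by
      apply ih (i + 1) a y ha
      · intro r hr
        have := hv (r + 1) (by simpa using Nat.succ_lt_succ hr)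
        have harith : i + 1 + (r + 1) = i + 1 + 1 + r := by omega
        rw [harith] at this
        simpa using this
      · rw [← hy, hlen]
    rw [hsplit, hx, ha, hlen, hrec]; rfl


end

section
variable {V : Type*} [DecidableEq V]

lemma mem_split_first {u : V} {l : List V} (h : u ∈ l) :
    ∃ Z W, l = Z ++ u :: W ∧ u ∉ Z := by
  induction l with
  | nil => simp at h
  | cons a l ih =>
    by_cases ha : a = u
    · exact ⟨[], l, by rw [ha]; rfl, by simp⟩
    · have : u ∈ l := by
        rcases List.mem_cons.mp h with h' | h'
        · exact absurd h'.symm ha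
        · exact h'
      obtain ⟨Z, W, hZW, hZ⟩ := ih this
      exact ⟨a :: Z, W, by rw [hZW]; rfl, by simp [hZ, Ne.symm ha]⟩

lemma snoc_sublist_mid : ∀ {X : List V} {Z Y : List V} {u : V}, u ∉ Z → u ∉ Y →
    (Z ++ [u]).Sublist (X ++ u :: Y) → Z.Sublist X := by
  intro X
  induction X with
  | nil =>
    intro Z Y u hZ hY h
    simp only [List.nil_append] at h
    rcases List.sublist_cons_iff.mp h with h' | ⟨r, hr, hr'⟩
    · exact absurd (h'.mem (by simp)) hY
    · cases Z with
      | nil => exact List.Sublist.refl _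
      | cons z Z' =>
        have : z = u := by simpa using congrArg List.head? hr
        exact absurd (this ▸ (List.mem_cons_self : z ∈ z :: Z')) hZ
  | cons x X' ih =>
    intro Z Y u hZ hY h
    rw [List.cons_append] at h
    rcases List.sublist_cons_iff.mp h with h' | ⟨r, hr, hr'⟩
    · exact (ih hZ hY h').trans (List.sublist_cons_self x X')
    · cases Z with
      | nil => exact List.nil_sublist _
      | cons z Z' =>
        have hz : z = x := by simpa using congrArg List.head? hr
        have hrest : Z' ++ [u] = r := by simpa using congrArg List.tail hr
        subst hz
        have hZ' : u ∉ Z' := fun hm => hZ (List.mem_cons_of_mem _ hm)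
        exact List.cons_sublist_cons.mpr (ih hZ' hY (hrest ▸ hr'))

lemma cons_sublist_mid : ∀ {Z : List V} {Y W : List V} {u : V}, u ∉ Z →
    (u :: Y).Sublist (Z ++ u :: W) → Y.Sublist W := by
  intro Z
  induction Z with
  | nil =>
    intro Y W u _ h
    simp only [List.nil_append] at h
    rcases List.sublist_cons_iff.mp h with h' | ⟨r, hr, hr'⟩
    · exact (List.sublist_cons_self u Y).trans h'
    · obtain ⟨rfl⟩ : Y = r := by simpa using congrArg List.tail hr
      exact hr'
  | cons z Z' ih =>
    intro Y W u hZ h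
    rw [List.cons_append] at h
    rcases List.sublist_cons_iff.mp h with h' | ⟨r, hr, hr'⟩
    · exact ih (fun hm => hZ (List.mem_cons_of_mem _ hm)) h'
    · have : u = z := by simpa using congrArg List.head? hr
      exact absurd (this ▸ (List.mem_cons_self : z ∈ z :: Z')) hZ


lemma head_eq_cons {t : V} {L : List V} (h : L.head? = some t) : ∃ l, L = t :: l := by
  cases L with
  | nil => simp at h
  | cons a l =>
    have ha : a = t := by simpa using h
    exact ⟨l, by rw [ha]⟩

lemma core (c : V → V → ℝ) (htri : ∀ x y z, c x z ≤ c x y + c y z)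
    (t u : V) (L B1 B2 X Y Z W : List V)
    (hLh : L.head? = some t) (hLc : L.count t = 1)
    (hB1h : B1.head? = some t) (hB1c : B1.count t = 1)
    (hB2h : B2.head? = some t)
    (h1 : B1.Sublist L) (h2 : B2.Sublist L) (hcase : B1 = L ∨ B2 = L)
    (hXY : B1 = X ++ u :: Y) (hY : u ∉ Y) (hZW : B2 = Z ++ u :: W) (hZ : u ∉ Z) :
    pcost c u (Y ++ Z) u ≤ pcost c t L.tail t := by
  obtain ⟨Lt, rfl⟩ := head_eq_cons hLh
  simp only [List.tail_cons]
  have htLt : t ∉ Lt := by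
    have := hLc
    rw [List.count_cons_self] at this
    exact List.count_eq_zero.mp (by omega)
  by_cases hu : u = t
  · subst hu
    -- X = [] and Z = []
    have hXnil : X = [] := by
      have hcnt : u ∉ X := by
        have := hB1c
        rw [hXY] at this
        rw [List.count_append, List.count_cons_self] at this
        exact List.count_eq_zero.mp (by omega)
      cases X with
      | nil => rfl
      | cons x X' =>
        have : x = u := by rw [hXY] at hB1h; simpa using hB1h
        exact absurd (this ▸ (List.mem_cons_self : x ∈ x :: X')) hcnt
    have hZnil : Z = [] := by
      cases Z with
      | nil => rfl
      | cons z Z' =>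
        have : z = u := by rw [hZW] at hB2h; simpa using hB2h
        exact absurd (this ▸ (List.mem_cons_self : z ∈ z :: Z')) hZ
    subst hXnil; subst hZnil
    simp only [List.nil_append] at hXY
    have hYsub : Y.Sublist Lt := by
      have := hXY ▸ h1
      exact List.cons_sublist_cons.mp this
    simpa using pcost_sublist c htri hYsub u u
  · -- u ≠ t; Z = t :: Z₂
    obtain ⟨Z₂, rfl⟩ : ∃ Z₂, Z = t :: Z₂ := by
      cases Z with
      | nil =>
        exfalso
        rw [hZW] at hB2h
        exact hu (by simpa using hB2h)
      | cons z Z' =>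
        have hz : z = t := by rw [hZW] at hB2h; simpa using hB2h
        exact ⟨Z', by rw [hz]⟩
    rcases hcase with hc | hc
    · -- B1 = L
      obtain ⟨X₂, rfl⟩ : ∃ X₂, X = t :: X₂ := by
        cases X with
        | nil =>
          exfalso
          rw [hc] at hXY
          have := congrArg List.head? hXY
          simp at this
          exact hu this.symm
        | cons x X' =>
          refine ⟨X', ?_⟩
          have hx : x = t := by
            have := congrArg List.head? hXY
            rw [hc] at this
            simpa using this.symm
          rw [hx]
    -- Lt = X₂ ++ u :: Y
      have hLt : Lt = X₂ ++ u :: Y := by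
        rw [hc] at hXY
        simpa using congrArg List.tail hXY
      have hZX : Z₂.Sublist X₂ := by
        have hsub : ((t :: Z₂) ++ [u]).Sublist ((t :: X₂) ++ u :: Y) := by
          have : ((t :: Z₂) ++ [u]).Sublist B2 := by
            rw [hZW]
            have : (t :: Z₂) ++ u :: W = ((t :: Z₂) ++ [u]) ++ W := by simp
            rw [this]
            exact List.sublist_append_left _ _
          exact this.trans (hXY ▸ hc ▸ h2)
        have := snoc_sublist_mid hZ hY hsub
        exact List.cons_sublist_cons.mp this
      rw [hLt, pcost_append, pcost_append]
      have := pcost_sublist c htri hZX t u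
      linarith [this]
    · -- B2 = L
      have hLt : Lt = Z₂ ++ u :: W := by
        rw [hc] at hZW
        simpa using congrArg List.tail hZW
      have hYW : Y.Sublist W := by
        apply cons_sublist_mid hZ
        have : (u :: Y).Sublist B1 := by
          rw [hXY]; exact List.sublist_append_right _ _
        exact hZW ▸ hc ▸ (this.trans h1)
      rw [hLt, pcost_append, pcost_append]
      have := pcost_sublist c htri hYW u t
      linarith [this]

lemma getD_tail_ne {t : V} {tl : List V} (htl : t ∉ tl) {m : ℕ} (hm : m < tl.length + 1)
    (hm0 : 0 < m) : (t :: tl).getD m t ≠ t := by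
  have h1 : m - 1 < tl.length := by omega
  have : (t :: tl).getD m t = tl.getD (m - 1) t := by
    obtain ⟨m', rfl⟩ : ∃ m', m = m' + 1 := ⟨m - 1, by omega⟩
    simp
  rw [this, List.getD_eq_getElem _ _ h1]
  intro hcon
  exact htl (hcon ▸ List.getElem_mem h1)

/-- the full loop of a periodic walk is the greatest spanning revisit cost -/
lemma loop_greatest (c : V → V → ℝ) (hnn : ∀ x y, 0 ≤ c x y)
    (N : Finset V) (t : V) (htN : t ∈ N) (tl : List V) (htl : t ∉ tl)
    (hcov : ∀ w ∈ N, w ∈ (t :: tl)) (f : ℕ → V)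
    (hf1 : ∀ i, f (i + (t :: tl).length) = f i)
    (hf2 : ∀ i, i < (t :: tl).length → f i = (t :: tl).getD i t) :
    IsGreatest (revCosts c N (t :: tl).length f) (pcost c t tl t) := by
  set L := t :: tl with hL
  have hp : L.length = tl.length + 1 := by simp [hL]
  have hf0 : f 0 = t := by rw [hf2 0 (by omega)]; rfl
  have hfp : f L.length = t := by
    have := hf1 0
    simpa [hf0] using this
  have hseg : segCost c f 0 L.length = pcost c t tl t := by
    have := segCost_pcost c f t tl 0 t t hf0 ?_ ?_
    · rw [← this]; congr 1; omega
    · intro r hr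
      rw [hf2 (0 + 1 + r) (by omega)]
      have h1 : 0 + 1 + r = r + 1 := by omega
      rw [h1]
      simp [hL]
    · have : 0 + 1 + tl.length = L.length := by omega
      rw [this, hfp]
  constructor
  · refine ⟨0, L.length, by omega, hf0 ▸ htN, ⟨by omega, by rw [hfp, hf0], ?_⟩, ?_, hseg.symm⟩
    · intro m h0m hmp hcon
      rw [hf2 m (by omega), hf0] at hcon
      exact getD_tail_ne htl (by omega) h0m hcon
    · intro w hw
      obtain ⟨idx, hidx, hval⟩ := List.mem_iff_getElem.mp (hcov w hw)
      exact ⟨idx, by omega, by omega, by rw [hf2 idx hidx, List.getD_eq_getElem _ _ hidx, hval]⟩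
  · rintro x ⟨i, j, hip, hiN, hrev, hsp, rfl⟩
    have hj : j ≤ i + L.length := by
      by_contra h
      push_neg at h
      exact hrev.2.2 (i + L.length) (by omega) h (hf1 i)
    calc segCost c f i j ≤ segCost c f i (i + L.length) := segCost_mono c hnn f hj
      _ = segCost c f 0 L.length := segCost_period c f hf1 i
      _ = pcost c t tl t := hseg

lemma flat_decomp : ∀ (bs : List (List V)) (i : ℕ), i < bs.flatten.length →
    ∃ pre B suf, bs = pre ++ B :: suf ∧ pre.flatten.length ≤ i ∧
      i < pre.flatten.length + B.length := by
  intro bs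
  induction bs with
  | nil => simp
  | cons B rest ih =>
    intro i hi
    by_cases h : i < B.length
    · exact ⟨[], B, rest, rfl, by simp, by simpa using h⟩
    · push_neg at h
      have hlt : i - B.length < rest.flatten.length := by
        simp only [List.flatten_cons, List.length_append] at hi
        omega
      obtain ⟨pre, B', suf, hdec, h1, h2⟩ := ih _ hlt
      refine ⟨B :: pre, B', suf, by rw [hdec]; rfl, ?_, ?_⟩
      · simp only [List.flatten_cons, List.length_append]; omega
      · simp only [List.flatten_cons, List.length_append]; omega

lemma flat_val (t : V) (bs : List (List V)) (f : ℕ → V)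
    (hfc2 : ∀ i, i < bs.flatten.length → f i = bs.flatten.getD i t)
    (pre : List (List V)) (B : List V) (suf : List (List V)) (hdec : bs = pre ++ B :: suf) :
    ∀ m, m < B.length → f (pre.flatten.length + m) = B.getD m t := by
  intro m hm
  have hflat : bs.flatten = pre.flatten ++ (B ++ suf.flatten) := by
    rw [hdec, List.flatten_append, List.flatten_cons]
  have hlt : pre.flatten.length + m < bs.flatten.length := by
    rw [hflat]
    simp only [List.length_append]
    omega
  rw [hfc2 _ hlt, hflat,
    List.getD_append_right _ _ _ _ (by omega), Nat.add_sub_cancel_left,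
    List.getD_append _ _ _ _ hm]

lemma flat_end (t : V) (bs : List (List V)) (f : ℕ → V)
    (hfc1 : ∀ i, f (i + bs.flatten.length) = f i)
    (hfc2 : ∀ i, i < bs.flatten.length → f i = bs.flatten.getD i t)
    (hheads : ∀ B ∈ bs, B.head? = some t)
    (pre : List (List V)) (B : List V) (suf : List (List V)) (hdec : bs = pre ++ B :: suf) :
    f (pre.flatten.length + B.length) = t := by
  cases suf with
  | nil =>
    have hk : bs.flatten.length = pre.flatten.length + B.length := by
      rw [hdec, List.flatten_append, List.flatten_cons]
      simp
    have hfk : f (pre.flatten.length + B.length) = f 0 := by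
      rw [← hk]
      simpa using hfc1 0
    rw [hfk]
    -- f 0 = t since the first block starts with t
    cases hbs0 : bs with
    | nil => simp [hbs0] at hdec
    | cons B0 rest =>
      have hB0 : B0.head? = some t := hheads B0 (by rw [hbs0]; exact List.mem_cons_self)
      obtain ⟨tl0, rfl⟩ : ∃ l, B0 = t :: l := by
        cases B0 with
        | nil => simp at hB0
        | cons a l => exact ⟨l, by rw [show a = t from by simpa using hB0]⟩
      have hk0 : 0 < bs.flatten.length := by rw [hbs0]; simp [List.flatten_cons]
      rw [hfc2 0 hk0, hbs0, List.flatten_cons]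
      rfl
  | cons B' suf' =>
    have : bs = (pre ++ [B]) ++ B' :: suf' := by rw [hdec]; simp
    have hval := flat_val t bs f hfc2 (pre ++ [B]) B' suf' this 0
    have hB' : B'.head? = some t := hheads B' (by rw [this]; simp)
    obtain ⟨tl', rfl⟩ : ∃ l, B' = t :: l := by
      cases B' with
      | nil => simp at hB'
      | cons a l => exact ⟨l, by rw [show a = t from by simpa using hB']⟩
    have h0 : (0 : ℕ) < (t :: tl').length := by simp
    have := hval h0
    simpa [List.flatten_append] using this


end

end PMPAux

end PMPAuxSection

open PMPAux

/-- Lemma 4, item 2: let `W_a`, `W_b` be cyclic walks (lists `La`, `Lb`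
rotated to start at a common target `t` occurring exactly once in each) with at most
`2n−1` visits, and `W_s` (list `Ls`) a common shortcut of both also starting at `t` and
containing it once. Any cyclic concatenation of copies of `La`, `Lb`, `Ls` in which no
copy of `La` is (cyclically) adjacent to a copy of `Lb`, and in which both `La` and
`Lb` appear, has revisit time `max(R(W_a), R(W_b))`. -/
theorem concat_three_walks_revisit_time {V : Type*} [DecidableEq V]
    (c : V → V → ℝ) (N : Finset V) (dV : V) (hd : dV ∉ N) (hn : 3 ≤ N.card)
    (hsymm : ∀ x y, c x y = c y x) (hnonneg : ∀ x y, 0 ≤ c x y)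
    (htri : ∀ x y z, c x z ≤ c x y + c y z)
    (t : V) (ht : t ∈ N)
    (La Lb Ls : List V)
    (haHead : La.head? = some t) (hbHead : Lb.head? = some t) (hsHead : Ls.head? = some t)
    (haOnce : La.count t = 1) (hbOnce : Lb.count t = 1) (hsOnce : Ls.count t = 1)
    (haLen : La.length ≤ 2 * N.card - 1) (hbLen : Lb.length ≤ 2 * N.card - 1)
    (haElem : ∀ x ∈ La, x ∈ N ∨ x = dV) (hbElem : ∀ x ∈ Lb, x ∈ N ∨ x = dV)
    (haCov : ∀ u ∈ N, u ∈ La) (hbCov : ∀ u ∈ N, u ∈ Lb) (hsCov : ∀ u ∈ N, u ∈ Ls)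
    (haChain : (La ++ [t]).Chain' (· ≠ ·)) (hbChain : (Lb ++ [t]).Chain' (· ≠ ·))
    (hsChain : (Ls ++ [t]).Chain' (· ≠ ·))
    (hsa : Ls.Sublist La) (hsb : Ls.Sublist Lb)
    (bs : List (List V)) (hbs : ∀ L ∈ bs, L = La ∨ L = Lb ∨ L = Ls)
    (hadj : bs.Chain' fun X Y => ¬(X = La ∧ Y = Lb) ∧ ¬(X = Lb ∧ Y = La))
    (hwrap : ¬(bs.getLast? = some La ∧ bs.head? = some Lb) ∧
      ¬(bs.getLast? = some Lb ∧ bs.head? = some La))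
    (haMem : La ∈ bs) (hbMem : Lb ∈ bs)
    (fa fb f : ℕ → V)
    (hfa : (∀ i, fa (i + La.length) = fa i) ∧ ∀ i, i < La.length → fa i = La.getD i t)
    (hfb : (∀ i, fb (i + Lb.length) = fb i) ∧ ∀ i, i < Lb.length → fb i = Lb.getD i t)
    (hfc : (∀ i, f (i + bs.flatten.length) = f i) ∧
      ∀ i, i < bs.flatten.length → f i = bs.flatten.getD i t)
    (Ra Rb : ℝ)
    (hRa : IsGreatest (revCosts c N La.length fa) Ra)
    (hRb : IsGreatest (revCosts c N Lb.length fb) Rb) :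
    IsGreatest (revCosts c N bs.flatten.length f) (max Ra Rb) := by
  obtain ⟨ta, hLa⟩ := head_eq_cons haHead
  obtain ⟨tb, hLb⟩ := head_eq_cons hbHead
  obtain ⟨ts, hLs⟩ := head_eq_cons hsHead
  have hta : t ∉ ta := by
    have := haOnce; rw [hLa, List.count_cons_self] at this
    exact List.count_eq_zero.mp (by omega)
  have htb : t ∉ tb := by
    have := hbOnce; rw [hLb, List.count_cons_self] at this
    exact List.count_eq_zero.mp (by omega)
  have hts : t ∉ ts := by
    have := hsOnce; rw [hLs, List.count_cons_self] at this
    exact List.count_eq_zero.mp (by omega)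
  have hblockh : ∀ B ∈ bs, B.head? = some t := by
    intro B hB; rcases hbs B hB with rfl | rfl | rfl <;> assumption
  have hblockc : ∀ B ∈ bs, B.count t = 1 := by
    intro B hB; rcases hbs B hB with rfl | rfl | rfl <;> assumption
  have hblockcov : ∀ B ∈ bs, ∀ w ∈ N, w ∈ B := by
    intro B hB; rcases hbs B hB with rfl | rfl | rfl <;> assumption
  set k := bs.flatten.length with hk
  -- identify Ra and Rb as loop costs
  have hgA : IsGreatest (revCosts c N La.length fa) (pcost c t ta t) := by
    rw [hLa]
    exact loop_greatest c hnonneg N t ht ta hta (hLa ▸ haCov) fa (hLa ▸ hfa.1) (hLa ▸ hfa.2)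
  have hgB : IsGreatest (revCosts c N Lb.length fb) (pcost c t tb t) := by
    rw [hLb]
    exact loop_greatest c hnonneg N t ht tb htb (hLb ▸ hbCov) fb (hLb ▸ hfb.1) (hLb ▸ hfb.2)
  have hRaEq : Ra = pcost c t ta t := hRa.unique hgA
  have hRbEq : Rb = pcost c t tb t := hRb.unique hgB
  -- membership of a full block loop in revCosts of f
  have hblockmem : ∀ (B : List V) (tlB : List V), B ∈ bs → B = t :: tlB → t ∉ tlB →
      (∀ w ∈ N, w ∈ B) → pcost c t tlB t ∈ revCosts c N k f := by
    intro B tlB hBmem hBeq htlB hBcov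
    obtain ⟨pre, suf, hdec⟩ := List.append_of_mem hBmem
    set o := pre.flatten.length with ho
    have hklen : k = o + B.length + suf.flatten.length := by
      rw [hk, hdec, ho, List.flatten_append, List.flatten_cons]
      simp only [List.length_append]
      omega
    have hB1 : 1 ≤ B.length := by rw [hBeq]; simp
    have hval := flat_val t bs f hfc.2 pre B suf hdec
    have hend := flat_end t bs f hfc.1 hfc.2 hblockh pre B suf hdec
    have hfo : f o = t := by
      have h0 := hval 0 (by omega)
      rw [Nat.add_zero, hBeq, List.getD_cons_zero] at h0
      exact h0
    refine ⟨o, o + B.length, by omega, by rw [hfo]; exact ht, ⟨by omega, by rw [hend, hfo], ?_⟩,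
        ?_, ?_⟩
    · intro m hom homB hcon
      have hmo : m - o < B.length := by omega
      have : f m = B.getD (m - o) t := by
        have := hval (m - o) hmo
        rwa [show o + (m - o) = m by omega] at this
      rw [this, hfo] at hcon
      rw [hBeq] at hcon
      have hltb : B.length = tlB.length + 1 := by rw [hBeq]; rfl
      exact getD_tail_ne htlB (by omega) (by omega) hcon
    · intro w hw
      obtain ⟨idx, hidx, hvalw⟩ := List.mem_iff_getElem.mp (hBcov w hw)
      exact ⟨o + idx, by omega, by omega,
        by rw [hval idx hidx, List.getD_eq_getElem _ _ hidx, hvalw]⟩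
    · have hlen : B.length = tlB.length + 1 := by rw [hBeq]; simp
      have := segCost_pcost c f t tlB o t t hfo ?_ ?_
      · rw [← this]
        congr 1
        omega
      · intro r hr
        have := hval (1 + r) (by omega)
        rw [show o + (1 + r) = o + 1 + r by omega] at this
        rw [this, hBeq, show (1 + r) = r + 1 by omega]
        simp
      · rw [show o + 1 + tlB.length = o + B.length by omega, hend]
  constructor
  · -- membership
    rcases le_total Rb Ra with hab | hab
    · rw [max_eq_left hab, hRaEq]
      exact hblockmem La ta haMem hLa hta haCov
    · rw [max_eq_right hab, hRbEq]
      exact hblockmem Lb tb hbMem hLb htb hbCov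
  · -- upper bound
    rintro x ⟨i, j, hik, hiN, hrev, hsp, rfl⟩
    obtain ⟨pre, B1, suf, hdec, ho, hiB⟩ := flat_decomp bs i hik
    set o := pre.flatten.length with hodef
    set P := B1.length with hPdef
    have hB1mem : B1 ∈ bs := by rw [hdec]; simp
    -- find B2 and the window facts
    obtain ⟨B2, hB2mem, hpair1, hpair2, hwin⟩ :
        ∃ B2, B2 ∈ bs ∧ ¬(B1 = La ∧ B2 = Lb) ∧ ¬(B1 = Lb ∧ B2 = La) ∧
          ∀ m, m < P + B2.length → f (o + m) = (B1 ++ B2).getD m t := by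
      cases hsuf : suf with
      | cons B2 suf' =>
        subst hsuf
        refine ⟨B2, by rw [hdec]; simp, ?_, ?_, ?_⟩
        · have hchain : bs.Chain' fun X Y => ¬(X = La ∧ Y = Lb) ∧ ¬(X = Lb ∧ Y = La) := hadj
          rw [hdec] at hchain
          have := (List.isChain_append.mp hchain).2.1
          exact (List.isChain_cons_cons.mp this).1.1
        · have hchain : bs.Chain' fun X Y => ¬(X = La ∧ Y = Lb) ∧ ¬(X = Lb ∧ Y = La) := hadj
          rw [hdec] at hchain
          have := (List.isChain_append.mp hchain).2.1
          exact (List.isChain_cons_cons.mp this).1.2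
        · intro m hm
          by_cases hmP : m < P
          · rw [flat_val t bs f hfc.2 pre B1 (B2 :: suf') hdec m hmP,
              List.getD_append _ _ _ _ hmP]
          · have hdec2 : bs = (pre ++ [B1]) ++ B2 :: suf' := by rw [hdec]; simp
            have hlen2 : (pre ++ [B1]).flatten.length = o + P := by
              rw [List.flatten_append]; simp [hodef, hPdef]
            have := flat_val t bs f hfc.2 (pre ++ [B1]) B2 suf' hdec2 (m - P) (by omega)
            rw [hlen2, show o + P + (m - P) = o + m by omega] at this
            rw [this, List.getD_append_right _ _ _ _ (by omega : B1.length ≤ m)]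
      | nil =>
        subst hsuf
        obtain ⟨B0, rest, hbs0⟩ : ∃ B0 rest, bs = B0 :: rest := by
          cases hb : bs with
          | nil => rw [hb] at haMem; simp at haMem
          | cons a l => exact ⟨a, l, rfl⟩
        have hlast : bs.getLast? = some B1 := by rw [hdec]; exact List.getLast?_concat
        have hhead : bs.head? = some B0 := by rw [hbs0]; rfl
        have hB0mem : B0 ∈ bs := by rw [hbs0]; exact List.mem_cons_self
        refine ⟨B0, hB0mem, ?_, ?_, ?_⟩
        · rintro ⟨h1, h2⟩; exact hwrap.1 ⟨h1 ▸ hlast, h2 ▸ hhead⟩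
        · rintro ⟨h1, h2⟩; exact hwrap.2 ⟨h1 ▸ hlast, h2 ▸ hhead⟩
        · intro m hm
          by_cases hmP : m < P
          · rw [flat_val t bs f hfc.2 pre B1 [] hdec m hmP,
              List.getD_append _ _ _ _ hmP]
          · have hkP : k = o + P := by
              rw [hk, hdec, hodef, hPdef, List.flatten_append, List.flatten_cons]
              simp only [List.length_append, List.flatten_nil, List.length_nil]
              omega
            have hper : f (o + m) = f (m - P) := by
              have h1 := hfc.1 (m - P)
              rw [show o + m = (m - P) + k by omega]
              exact h1
            have hv0 := flat_val t bs f hfc.2 [] B0 rest (by rw [hbs0]; rfl) (m - P) (by omega)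
            simp only [List.flatten_nil, List.length_nil, Nat.zero_add] at hv0
            rw [hper, hv0, List.getD_append_right _ _ _ _ (by omega : B1.length ≤ m)]
    -- block shapes
    obtain ⟨tb1, hB1eq⟩ := head_eq_cons (hblockh B1 hB1mem)
    have htb1 : t ∉ tb1 := by
      have := hblockc B1 hB1mem; rw [hB1eq, List.count_cons_self] at this
      exact List.count_eq_zero.mp (by omega)
    have hPtb : P = tb1.length + 1 := by rw [hPdef, hB1eq]; rfl
    have hP1 : 1 ≤ P := by omega
    have hQ1 : 1 ≤ B2.length := by
      obtain ⟨tb2, hB2eq⟩ := head_eq_cons (hblockh B2 hB2mem)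
      rw [hB2eq]; simp
    set di := i - o with hdi
    have hdiP : di < P := by omega
    have hfi : f i = B1.getD di t := by
      have := hwin di (by omega)
      rw [show o + di = i by omega] at this
      rw [this, List.getD_append _ _ _ _ (by omega : di < B1.length)]
    -- decompose B2 at the first occurrence of u = f i
    have huB2 : f i ∈ B2 := hblockcov B2 hB2mem (f i) hiN
    obtain ⟨Z, W, hZW, hZnot⟩ := mem_split_first huB2
    have hZlen : Z.length < B2.length := by rw [hZW]; simp
    set e := o + P + Z.length with he
    have hfe : f e = f i := by
      have := hwin (P + Z.length) (by omega)
      rw [show o + (P + Z.length) = e by omega] at this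
      rw [this, List.getD_append_right _ _ _ _ (by omega : B1.length ≤ P + Z.length),
        show P + Z.length - B1.length = Z.length by omega, hZW,
        List.getD_append_right _ _ _ _ (le_refl Z.length), Nat.sub_self,
        List.getD_cons_zero]
    have hje : j ≤ e := by
      by_contra hcon
      push_neg at hcon
      exact hrev.2.2 e (by omega) hcon hfe
    -- decompose B1 at position di
    obtain ⟨X, Y, hXY, hXlen, hYnot⟩ :
        ∃ X Y, B1 = X ++ (f i) :: Y ∧ X.length = di ∧ f i ∉ Y := by
      by_cases hu : f i = t
      · have hdi0 : di = 0 := by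
          by_contra hdin
          have hne : B1.getD di t ≠ t := by
            rw [hB1eq]
            exact getD_tail_ne htb1 (by omega) (by omega)
          exact hne (by rw [← hfi]; exact hu)
        exact ⟨[], tb1, by rw [hB1eq, hu, List.nil_append], by simp [hdi0], by rw [hu]; exact htb1⟩
      · have hoi : o < i := by
          rcases Nat.lt_or_ge o i with h | h
          · exact h
          · exfalso
            apply hu
            rw [hfi, show di = 0 by omega, hB1eq, List.getD_cons_zero]
        have hjP : o + P ≤ j := by
          by_contra hcon
          push_neg at hcon
          obtain ⟨m, him, hmj, hmt⟩ := hsp t ht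
          have : f m = B1.getD (m - o) t := by
            have := hwin (m - o) (by omega)
            rwa [show o + (m - o) = m by omega,
              List.getD_append _ _ _ _ (by omega : m - o < B1.length)] at this
          rw [this, hB1eq] at hmt
          exact getD_tail_ne htb1 (by omega) (by omega) hmt
        refine ⟨B1.take di, B1.drop (di + 1), ?_, ?_, ?_⟩
        · have hgd : B1[di]'(by omega) = f i := by
            rw [hfi, List.getD_eq_getElem _ _ (by omega : di < B1.length)]
          conv_lhs => rw [← List.take_append_drop di B1]
          rw [← List.getElem_cons_drop (as := B1) (i := di) (by omega), hgd]
        · rw [List.length_take]; omega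
        · intro hmem
          obtain ⟨r, hr, hrv⟩ := List.mem_iff_getElem.mp hmem
          have hdl := List.length_drop (i := di + 1) (l := B1)
          have hrlen : di + 1 + r < P := by omega
          have hfval : f (i + 1 + r) = B1.getD (di + 1 + r) t := by
            have := hwin (di + 1 + r) (by omega)
            rwa [show o + (di + 1 + r) = i + 1 + r by omega,
              List.getD_append _ _ _ _ (by omega : di + 1 + r < B1.length)] at this
          have heq : f (i + 1 + r) = f i := by
            rw [hfval, List.getD_eq_getElem _ _ (by omega : di + 1 + r < B1.length), ← hrv,
              List.getElem_drop]
          exact hrev.2.2 (i + 1 + r) (by omega) (by omega) heq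
    have hP_split : P = X.length + 1 + Y.length := by
      rw [hPdef, hXY]
      simp only [List.length_append, List.length_cons]
      omega
    -- cost of the window path
    have hcost : segCost c f i e = pcost c (f i) (Y ++ Z) (f i) := by
      have hlen : i + 1 + (Y ++ Z).length = e := by
        rw [List.length_append]; omega
      have hmain := segCost_pcost c f t (Y ++ Z) i (f i) (f i) rfl ?_ ?_
      · rwa [hlen] at hmain
      · intro r hr
        rw [List.length_append] at hr
        by_cases hrY : r < Y.length
        · have := hwin (di + 1 + r) (by omega)
          rw [show o + (di + 1 + r) = i + 1 + r by omega,
            List.getD_append _ _ _ _ (by omega : di + 1 + r < B1.length)] at this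
          rw [this, hXY, List.getD_append_right _ _ _ _ (by omega : X.length ≤ di + 1 + r),
            show di + 1 + r - X.length = r + 1 by omega, List.getD_cons_succ,
            List.getD_append _ _ _ _ hrY]
        · have hs : r - Y.length < Z.length := by omega
          have := hwin (P + (r - Y.length)) (by omega)
          rw [show o + (P + (r - Y.length)) = i + 1 + r by omega,
            List.getD_append_right _ _ _ _ (by omega : B1.length ≤ P + (r - Y.length)),
            show P + (r - Y.length) - B1.length = r - Y.length by omega, hZW,
            List.getD_append _ _ _ _ hs] at this
          rw [this, List.getD_append_right _ _ _ _ (by omega : Y.length ≤ r)]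
      · rw [hlen, hfe]
    have hxle : segCost c f i j ≤ pcost c (f i) (Y ++ Z) (f i) := by
      rw [← hcost]
      exact segCost_mono c hnonneg f hje
    -- choose the comparison walk L
    obtain ⟨L, hLmem, hLcase⟩ :
        ∃ L, (L = La ∨ L = Lb ∨ L = Ls) ∧
          ((B1 = L ∧ B2.Sublist L) ∨ (B2 = L ∧ B1.Sublist L)) := by
      rcases hbs B1 hB1mem with h1 | h1 | h1 <;> rcases hbs B2 hB2mem with h2 | h2 | h2
      · exact ⟨La, Or.inl rfl, Or.inl ⟨h1, by rw [h2]⟩⟩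
      · exact absurd ⟨h1, h2⟩ hpair1
      · exact ⟨La, Or.inl rfl, Or.inl ⟨h1, by rw [h2]; exact hsa⟩⟩
      · exact absurd ⟨h1, h2⟩ hpair2
      · exact ⟨Lb, Or.inr (Or.inl rfl), Or.inl ⟨h1, by rw [h2]⟩⟩
      · exact ⟨Lb, Or.inr (Or.inl rfl), Or.inl ⟨h1, by rw [h2]; exact hsb⟩⟩
      · exact ⟨La, Or.inl rfl, Or.inr ⟨h2, by rw [h1]; exact hsa⟩⟩
      · exact ⟨Lb, Or.inr (Or.inl rfl), Or.inr ⟨h2, by rw [h1]; exact hsb⟩⟩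
      · exact ⟨Ls, Or.inr (Or.inr rfl), Or.inl ⟨h1, by rw [h2]⟩⟩
    have hLh : L.head? = some t := by rcases hLmem with rfl | rfl | rfl <;> assumption
    have hLc : L.count t = 1 := by rcases hLmem with rfl | rfl | rfl <;> assumption
    have hsub1 : B1.Sublist L := by
      rcases hLcase with ⟨h1, _⟩ | ⟨_, h1⟩
      · rw [h1]
      · exact h1
    have hsub2 : B2.Sublist L := by
      rcases hLcase with ⟨_, h1⟩ | ⟨h1, _⟩
      · exact h1
      · rw [h1]
    have hcasee : B1 = L ∨ B2 = L := by
      rcases hLcase with ⟨h1, _⟩ | ⟨h1, _⟩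
      · exact Or.inl h1
      · exact Or.inr h1
    have hcore := core c htri t (f i) L B1 B2 X Y Z W hLh hLc (hblockh B1 hB1mem)
      (hblockc B1 hB1mem) (hblockh B2 hB2mem) hsub1 hsub2 hcasee hXY hYnot hZW hZnot
    have hfin : pcost c t L.tail t ≤ max Ra Rb := by
      rcases hLmem with rfl | rfl | rfl
      · rw [hLa, List.tail_cons, ← hRaEq]
        exact le_max_left Ra Rb
      · rw [hLb, List.tail_cons, ← hRbEq]
        exact le_max_right Ra Rb
      · rw [hLs, List.tail_cons]
        have hsubts : ts.Sublist ta := by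
          have := hsa
          rw [hLa, hLs] at this
          exact List.cons_sublist_cons.mp this
        calc pcost c t ts t ≤ pcost c t ta t := pcost_sublist c htri hsubts t t
          _ = Ra := hRaEq.symm
          _ ≤ max Ra Rb := le_max_left Ra Rb
    exact hxle.trans (hcore.trans hfin)
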